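/- In the formal power series ring ℤ[t1^{±1}, t2^{±1}]^{S3}[[z]]/(z⁴) with e^{α1} = t1, e^{α2} = t2, the truncated infinite product Φ^{(2)} = (∏_{α∈Δ}(1-e^α z)²)(1-z)⁴ (∏_{α∈Δ}(1-e^α z²)⁴)(1-z²)⁹ (∏_{α∈Δ}(1-e^α z³)⁸)(1-z³)^{20} equals 1 - 2z·ch L(α1+α2) + z²(ch L(2α1+2α2) + 3 ch L(2α1+α2) + 3 ch L(α1+2α2)) - 2z³(ch L(2α1+3α2) + ch L(3α1+2α2) - ch L(2α1+α2) - ch L(α1+2α2)) modulo z⁴. -/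

import Mathlib

open Polynomial

/-- The Laurent polynomial ring `ℤ[t₁^{±1}, t₂^{±1}]`, as the group algebra of the root
lattice `ℤα₁ ⊕ ℤα₂` of `sl₃`; `e (m₁, m₂)` is `e^{m₁α₁+m₂α₂} = t₁^{m₁} t₂^{m₂}`. -/
abbrev ChRing : Type := AddMonoidAlgebra ℤ (ℤ × ℤ)

/-- The formal exponential `e^{m₁α₁ + m₂α₂}`. -/
noncomputable def expw (p : ℤ × ℤ) : ChRing := AddMonoidAlgebra.single p 1

/-- Sum of formal exponentials over a list of weights. -/
noncomputable def wsum (l : List (ℤ × ℤ)) : ChRing := (l.map expw).sum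

/-- The root system `Δ = {±α₁, ±α₂, ±(α₁+α₂)}` of `sl₃`, in `(α₁, α₂)`-coordinates. -/
def Δ0 : List (ℤ × ℤ) := [(1,0), (0,1), (1,1), (-1,0), (0,-1), (-1,-1)]
def Δ1 : List (ℤ × ℤ) := [(2,1), (-1,1), (-1,-2)]
def Δ2 : List (ℤ × ℤ) := [(1,2), (1,-1), (-2,-1)]
def Δ3 : List (ℤ × ℤ) := [(3,2), (3,1), (-1,2), (-1,-3), (-2,1), (-2,-3)]
def Δ4 : List (ℤ × ℤ) := [(2,3), (2,-1), (1,-2), (1,3), (-3,-1), (-3,-2)]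

/-- `{2α : α ∈ Δ}`. -/
def Δ0double : List (ℤ × ℤ) := Δ0.map fun p => (2 * p.1, 2 * p.2)

/-- The Weyl characters of the simple `sl₃`-modules `L(m₁α₁ + m₂α₂)` appearing below,
written out through their weight multiplicities. -/
noncomputable def ch11 : ChRing := wsum Δ0 + 2
noncomputable def ch21 : ChRing := wsum Δ1 + wsum Δ0 + 1
noncomputable def ch12 : ChRing := wsum Δ2 + wsum Δ0 + 1
noncomputable def ch22 : ChRing := wsum Δ0double + wsum Δ1 + wsum Δ2 + 2 * wsum Δ0 + 3
noncomputable def ch32 : ChRing := wsum Δ3 + wsum Δ0double + wsum Δ2 + 2 * wsum Δ1 + 2 * wsum Δ0 + 2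
noncomputable def ch23 : ChRing := wsum Δ4 + wsum Δ0double + wsum Δ1 + 2 * wsum Δ2 + 2 * wsum Δ0 + 2

/-- The truncated infinite product `Φ⁽²⁾` for `D = 2`, with exponents
`a₁ = 2, a₂ = 4, a₃ = 8` and `2a₁+b₁ = 4, 2a₂+b₂ = 9, 2a₃+b₃ = 20`. -/
noncomputable def Phi2 : Polynomial ChRing :=
  ((Δ0.map fun α => 1 - C (expw α) * X).prod) ^ 2 * (1 - X) ^ 4 *
    ((Δ0.map fun α => 1 - C (expw α) * X ^ 2).prod) ^ 4 * (1 - X ^ 2) ^ 9 *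
    ((Δ0.map fun α => 1 - C (expw α) * X ^ 3).prod) ^ 8 * (1 - X ^ 3) ^ 20

noncomputable def s1 : ChRing := wsum Δ0

noncomputable def s2 : ChRing :=
  expw (1,0) * expw (0,1) +
  expw (1,0) * expw (1,1) +
  expw (1,0) * expw (-1,0) +
  expw (1,0) * expw (0,-1) +
  expw (1,0) * expw (-1,-1) +
  expw (0,1) * expw (1,1) +
  expw (0,1) * expw (-1,0) +
  expw (0,1) * expw (0,-1) +
  expw (0,1) * expw (-1,-1) +
  expw (1,1) * expw (-1,0) +
  expw (1,1) * expw (0,-1) +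
  expw (1,1) * expw (-1,-1) +
  expw (-1,0) * expw (0,-1) +
  expw (-1,0) * expw (-1,-1) +
  expw (0,-1) * expw (-1,-1)

noncomputable def s3 : ChRing :=
  expw (1,0) * expw (0,1) * expw (1,1) +
  expw (1,0) * expw (0,1) * expw (-1,0) +
  expw (1,0) * expw (0,1) * expw (0,-1) +
  expw (1,0) * expw (0,1) * expw (-1,-1) +
  expw (1,0) * expw (1,1) * expw (-1,0) +
  expw (1,0) * expw (1,1) * expw (0,-1) +
  expw (1,0) * expw (1,1) * expw (-1,-1) +
  expw (1,0) * expw (-1,0) * expw (0,-1) +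
  expw (1,0) * expw (-1,0) * expw (-1,-1) +
  expw (1,0) * expw (0,-1) * expw (-1,-1) +
  expw (0,1) * expw (1,1) * expw (-1,0) +
  expw (0,1) * expw (1,1) * expw (0,-1) +
  expw (0,1) * expw (1,1) * expw (-1,-1) +
  expw (0,1) * expw (-1,0) * expw (0,-1) +
  expw (0,1) * expw (-1,0) * expw (-1,-1) +
  expw (0,1) * expw (0,-1) * expw (-1,-1) +
  expw (1,1) * expw (-1,0) * expw (0,-1) +
  expw (1,1) * expw (-1,0) * expw (-1,-1) +
  expw (1,1) * expw (0,-1) * expw (-1,-1) +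
  expw (-1,0) * expw (0,-1) * expw (-1,-1)

noncomputable def e4 : ChRing :=
  expw (1,0) * expw (0,1) * expw (1,1) * expw (-1,0) +
  expw (1,0) * expw (0,1) * expw (1,1) * expw (0,-1) +
  expw (1,0) * expw (0,1) * expw (1,1) * expw (-1,-1) +
  expw (1,0) * expw (0,1) * expw (-1,0) * expw (0,-1) +
  expw (1,0) * expw (0,1) * expw (-1,0) * expw (-1,-1) +
  expw (1,0) * expw (0,1) * expw (0,-1) * expw (-1,-1) +
  expw (1,0) * expw (1,1) * expw (-1,0) * expw (0,-1) +
  expw (1,0) * expw (1,1) * expw (-1,0) * expw (-1,-1) +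
  expw (1,0) * expw (1,1) * expw (0,-1) * expw (-1,-1) +
  expw (1,0) * expw (-1,0) * expw (0,-1) * expw (-1,-1) +
  expw (0,1) * expw (1,1) * expw (-1,0) * expw (0,-1) +
  expw (0,1) * expw (1,1) * expw (-1,0) * expw (-1,-1) +
  expw (0,1) * expw (1,1) * expw (0,-1) * expw (-1,-1) +
  expw (0,1) * expw (-1,0) * expw (0,-1) * expw (-1,-1) +
  expw (1,1) * expw (-1,0) * expw (0,-1) * expw (-1,-1)

noncomputable def e5 : ChRing :=
  expw (1,0) * expw (0,1) * expw (1,1) * expw (-1,0) * expw (0,-1) +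
  expw (1,0) * expw (0,1) * expw (1,1) * expw (-1,0) * expw (-1,-1) +
  expw (1,0) * expw (0,1) * expw (1,1) * expw (0,-1) * expw (-1,-1) +
  expw (1,0) * expw (0,1) * expw (-1,0) * expw (0,-1) * expw (-1,-1) +
  expw (1,0) * expw (1,1) * expw (-1,0) * expw (0,-1) * expw (-1,-1) +
  expw (0,1) * expw (1,1) * expw (-1,0) * expw (0,-1) * expw (-1,-1)

noncomputable def e6 : ChRing :=
  expw (1,0) * expw (0,1) * expw (1,1) * expw (-1,0) * expw (0,-1) * expw (-1,-1)


noncomputable def W3 : Polynomial ChRing :=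
  C ((27) + (8) * s3 + (-6) * s2 + s2 * s2 + (20) * s1 + (2) * s1 * s3 + (-19) * s1 * s1 + (-4) * s1 * s1 * s1) +
  C ((96) + (6) * s3 + (24) * s2 + (-2) * s2 * s3 + (-4) * s2 * s2 + (-78) * s1 + (22) * s1 * s2 + (-44) * s1 * s1 + (8) * s1 * s1 * s2 + (8) * s1 * s1 * s1) * X +
  C ((-649) + (-24) * s3 + s3 * s3 + (54) * s2 + (8) * s2 * s3 + (-3) * s2 * s2 + (-396) * s1 + (-22) * s1 * s3 + (64) * s1 * s2 + (-4) * s1 * s2 * s2 + (-53) * s1 * s1 + (-8) * s1 * s1 * s3 + (-16) * s1 * s1 * s2 + (-20) * s1 * s1 * s1) * X ^ 2 +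
  C ((1060) + (-54) * s3 + (-4) * s3 * s3 + (192) * s2 + (6) * s2 * s3 + (12) * s2 * s2 + (698) * s1 + (-64) * s1 * s3 + (-102) * s1 * s2 + (8) * s1 * s2 * s3 + (8) * s1 * s2 * s2 + (408) * s1 * s1 + (16) * s1 * s1 * s3 + (-24) * s1 * s1 * s2 + (232) * s1 * s1 * s1 + (32) * s1 * s1 * s1 * s1) * X ^ 3 +
  C ((-720) + (-192) * s3 + (-3) * s3 * s3 + (-1298) * s2 + (-24) * s2 * s3 + (27) * s2 * s2 + (-292) * s1 + (102) * s1 * s3 + (-4) * s1 * s3 * s3 + (-600) * s1 * s2 + (-16) * s1 * s2 * s3 + (44) * s1 * s2 * s2 + (935) * s1 * s1 + (24) * s1 * s1 * s3 + (-208) * s1 * s1 * s2 + (-12) * s1 * s1 * s1 + (-64) * s1 * s1 * s1 * s2 + (-128) * s1 * s1 * s1 * s1) * X ^ 4 +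
  C ((180) + (1298) * s3 + (12) * s3 * s3 + (2120) * s2 + (-54) * s2 * s3 + (96) * s2 * s2 + (2392) * s1 + (600) * s1 * s3 + (8) * s1 * s3 * s3 + (98) * s1 * s2 + (-88) * s1 * s2 * s3 + (-24) * s1 * s2 * s2 + (-1732) * s1 * s1 + (208) * s1 * s1 * s3 + (216) * s1 * s1 * s2 + (32) * s1 * s1 * s2 * s2 + (-1368) * s1 * s1 * s1 + (64) * s1 * s1 * s1 * s3 + (256) * s1 * s1 * s1 * s2 + (-96) * s1 * s1 * s1 * s1) * X ^ 5 +
  C ((-2120) * s3 + (27) * s3 * s3 + (-1440) * s2 + (-192) * s2 * s3 + (-649) * s2 * s2 + (-5960) * s1 + (-98) * s1 * s3 + (44) * s1 * s3 * s3 + (1536) * s1 * s2 + (48) * s1 * s2 * s3 + (-204) * s1 * s2 * s2 + (448) * s1 * s1 + (-216) * s1 * s1 * s3 + (1968) * s1 * s1 * s2 + (-64) * s1 * s1 * s2 * s3 + (-128) * s1 * s1 * s2 * s2 + (100) * s1 * s1 * s1 + (-256) * s1 * s1 * s1 * s3 + (192) * s1 * s1 * s1 * s2 + (384) * s1 * s1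 * s1 * s1) * X ^ 6 +
  C ((1440) * s3 + (96) * s3 * s3 + (360) * s2 + (1298) * s2 * s3 + (1060) * s2 * s2 + (5040) * s1 + (-1536) * s1 * s3 + (-24) * s1 * s3 * s3 + (3344) * s1 * s2 + (408) * s1 * s2 * s3 + (-600) * s1 * s2 * s2 + (-9388) * s1 * s1 + (-1968) * s1 * s1 * s3 + (32) * s1 * s1 * s3 * s3 + (-1928) * s1 * s1 * s2 + (256) * s1 * s1 * s2 * s3 + (-96) * s1 * s1 * s2 * s2 + (-5192) * s1 * s1 * s1 + (-192) * s1 * s1 * s1 * s3 + (-768) * s1 * s1 * s1 * s2 + (864) * s1 * s1 * s1 * s1) * X ^ 7 +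
  C ((-360) * s3 + (-649) * s3 * s3 + (-2120) * s2 * s3 + (-720) * s2 * s2 + (-1440) * s1 + (-3344) * s1 * s3 + (-204) * s1 * s3 * s3 + (-11560) * s1 * s2 + (1200) * s1 * s2 * s3 + (1828) * s1 * s2 * s2 + (23840) * s1 * s1 + (1928) * s1 * s1 * s3 + (-128) * s1 * s1 * s3 * s3 + (4240) * s1 * s1 * s2 + (192) * s1 * s1 * s2 * s3 + (384) * s1 * s1 * s2 * s2 + (35936) * s1 * s1 * s1 + (768) * s1 * s1 * s1 * s3 + (-1728) * s1 * s1 * s1 * s2 + (3072) * s1 * s1 * s1 * s1) * X ^ 8 +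
  C ((1060) * s3 * s3 + (1440) * s2 * s3 + (180) * s2 * s2 + (11560) * s1 * s3 + (-600) * s1 * s3 * s3 + (10080) * s1 * s2 + (-3656) * s1 * s2 * s3 + (952) * s1 * s2 * s2 + (-20160) * s1 * s1 + (-4240) * s1 * s1 * s3 + (-96) * s1 * s1 * s3 * s3 + (-30336) * s1 * s1 * s2 + (-768) * s1 * s1 * s2 * s3 + (864) * s1 * s1 * s2 * s2 + (-62800) * s1 * s1 * s1 + (1728) * s1 * s1 * s1 * s3 + (-6144) * s1 * s1 * s1 * s2 + (-20768) * s1 * s1 * s1 * s1) * X ^ 9 +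
  C ((-720) * s3 * s3 + (-360) * s2 * s3 + (-10080) * s1 * s3 + (1828) * s1 * s3 * s3 + (-2880) * s1 * s2 + (-1904) * s1 * s2 * s3 + (-5600) * s1 * s2 * s2 + (5760) * s1 * s1 + (30336) * s1 * s1 * s3 + (384) * s1 * s1 * s3 * s3 + (57760) * s1 * s1 * s2 + (-1728) * s1 * s1 * s2 * s3 + (3072) * s1 * s1 * s2 * s2 + (44640) * s1 * s1 * s1 + (6144) * s1 * s1 * s1 * s3 + (41536) * s1 * s1 * s1 * s2 + (33920) * s1 * s1 * s1 * s1) * X ^ 10 +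
  C ((180) * s3 * s3 + (2880) * s1 * s3 + (952) * s1 * s3 * s3 + (11200) * s1 * s2 * s3 + (5040) * s1 * s2 * s2 + (-57760) * s1 * s1 * s3 + (864) * s1 * s1 * s3 * s3 + (-43200) * s1 * s1 * s2 + (-6144) * s1 * s1 * s2 * s3 + (-20768) * s1 * s1 * s2 * s2 + (-11520) * s1 * s1 * s1 + (-41536) * s1 * s1 * s1 * s3 + (-67840) * s1 * s1 * s1 * s2 + (-23040) * s1 * s1 * s1 * s1) * X ^ 11 +
  C ((-5600) * s1 * s3 * s3 + (-10080) * s1 * s2 * s3 + (-1440) * s1 * s2 * s2 + (43200) * s1 * s1 * s3 + (3072) * s1 * s1 * s3 * s3 + (11520) * s1 * s1 * s2 + (41536) * s1 * s1 * s2 * s3 + (33920) * s1 * s1 * s2 * s2 + (67840) * s1 * s1 * s1 * s3 + (46080) * s1 * s1 * s1 * s2 + (5760) * s1 * s1 * s1 * s1) * X ^ 12 +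
  C ((5040) * s1 * s3 * s3 + (2880) * s1 * s2 * s3 + (-11520) * s1 * s1 * s3 + (-20768) * s1 * s1 * s3 * s3 + (-67840) * s1 * s1 * s2 * s3 + (-23040) * s1 * s1 * s2 * s2 + (-46080) * s1 * s1 * s1 * s3 + (-11520) * s1 * s1 * s1 * s2) * X ^ 13 +
  C ((-1440) * s1 * s3 * s3 + (33920) * s1 * s1 * s3 * s3 + (46080) * s1 * s1 * s2 * s3 + (5760) * s1 * s1 * s2 * s2 + (11520) * s1 * s1 * s1 * s3) * X ^ 14 +
  C ((-23040) * s1 * s1 * s3 * s3 + (-11520) * s1 * s1 * s2 * s3) * X ^ 15 +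
  C ((5760) * s1 * s1 * s3 * s3) * X ^ 16


lemma expw_mul (p q : ℤ × ℤ) : expw p * expw q = expw (p + q) := by
  simp [expw, AddMonoidAlgebra.single_mul_single]

lemma expw_sq (p : ℤ × ℤ) : expw p ^ 2 = expw (p + p) := by rw [sq, expw_mul]

lemma expw_zero : expw (0, 0) = 1 := by
  simp [expw, AddMonoidAlgebra.one_def]
  rfl

lemma expw_zero' : expw 0 = 1 := expw_zero

lemma modcong_trans {f g h : Polynomial ChRing} (h1 : X ^ 4 ∣ f - g) (h2 : X ^ 4 ∣ g - h) :
    X ^ 4 ∣ f - h := by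
  have e : f - h = (f - g) + (g - h) := by ring
  rw [e]; exact dvd_add h1 h2

lemma modcong_mul {f f' g g' : Polynomial ChRing} (hf : X ^ 4 ∣ f - f')
    (hg : X ^ 4 ∣ g - g') : X ^ 4 ∣ f * g - f' * g' := by
  have e : f * g - f' * g' = (f - f') * g + f' * (g - g') := by ring
  rw [e]; exact dvd_add (hf.mul_right _) (hg.mul_left _)

lemma modcong_pow {f f' : Polynomial ChRing} (hf : X ^ 4 ∣ f - f') (n : ℕ) :
    X ^ 4 ∣ f ^ n - f' ^ n := by
  induction n with
  | zero => simp
  | succ n ih => rw [pow_succ, pow_succ]; exact modcong_mul ih hf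

lemma one_sub_pow {R : Type*} [CommRing R] (u : R) (n : ℕ) :
    u ^ 2 ∣ (1 - u) ^ n - (1 - n * u) := by
  induction n with
  | zero => simp
  | succ n ih =>
    have hc : ((n + 1 : ℕ) : R) = (n : R) + 1 := by push_cast; ring
    have e : (1 - u) ^ (n + 1) - (1 - ((n : R) + 1) * u)
        = (1 - u) * ((1 - u) ^ n - (1 - (n : R) * u)) + (n : R) * u ^ 2 := by ring
    rw [hc, e]
    exact dvd_add (ih.mul_left _) (dvd_mul_left _ _)

noncomputable def P1 : Polynomial ChRing := 1 - C s1 * X + C s2 * X ^ 2 - C s3 * X ^ 3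

lemma eL : ((Δ0.map fun α => 1 - C (expw α) * X).prod : Polynomial ChRing)
    = P1 + X ^ 4 * (C e4 - C e5 * X + C e6 * X ^ 2) := by
  simp only [Δ0, List.map_cons, List.map_nil, List.prod_cons, List.prod_nil,
    P1, s1, s2, s3, e4, e5, e6, wsum, List.sum_cons, List.sum_nil,
    map_add, map_mul, map_zero]
  ring

lemma eM : ((Δ0.map fun α => 1 - C (expw α) * X ^ 2).prod : Polynomial ChRing)
    = 1 - C s1 * X ^ 2
      + X ^ 4 * (C s2 - C s3 * X ^ 2 + C e4 * X ^ 4 - C e5 * X ^ 6 + C e6 * X ^ 8) := by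
  simp only [Δ0, List.map_cons, List.map_nil, List.prod_cons, List.prod_nil,
    s1, s2, s3, e4, e5, e6, wsum, List.sum_cons, List.sum_nil,
    map_add, map_mul, map_zero]
  ring

lemma eN : ((Δ0.map fun α => 1 - C (expw α) * X ^ 3).prod : Polynomial ChRing)
    = 1 - C s1 * X ^ 3
      + X ^ 4 * (X ^ 2 *
        (C s2 - C s3 * X ^ 3 + C e4 * X ^ 6 - C e5 * X ^ 9 + C e6 * X ^ 12)) := by
  simp only [Δ0, List.map_cons, List.map_nil, List.prod_cons, List.prod_nil,
    s1, s2, s3, e4, e5, e6, wsum, List.sum_cons, List.sum_nil,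
    map_add, map_mul, map_zero]
  ring

noncomputable def Q2 : Polynomial ChRing :=
  P1 ^ 2 * (1 - X) ^ 4 * (1 - 4 * (C s1 * X ^ 2)) * (1 - 9 * X ^ 2)
    * (1 - 8 * (C s1 * X ^ 3)) * (1 - 20 * X ^ 3)

noncomputable def finq : Polynomial ChRing :=
  1 + C (-(2 * (s1 + 2))) * X + C (s1 ^ 2 + 2 * s2 + 4 * s1 - 3) * X ^ 2
    + C (-(2 * (s3 + s1 * s2 - 2 * s1 ^ 2 + 4 * s2 - 7 * s1 - 6))) * X ^ 3

lemma hQ2 : (X : Polynomial ChRing) ^ 4 ∣ Q2 - finq := by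
  refine ⟨W3, ?_⟩
  simp only [Q2, finq, P1, W3, map_add, map_mul, map_neg, map_sub, map_pow, map_one,
    map_ofNat]
  ring

set_option maxHeartbeats 1000000 in
lemma i2 : ch22 + 3 * ch21 + 3 * ch12 = s1 ^ 2 + 2 * s2 + 4 * s1 - 3 := by
  simp only [ch22, ch21, ch12, s1, s2, Δ0double, Δ0, Δ1, Δ2, wsum, List.map_cons,
    List.map_nil, List.sum_cons, List.sum_nil]
  ring_nf
  simp only [expw_sq, expw_mul, Prod.mk_add_mk, expw_zero]
  norm_num [expw_zero, expw_zero']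
  ring

set_option maxHeartbeats 2000000 in
lemma i3 : ch23 + ch32 - ch21 - ch12
    = s3 + s1 * s2 - 2 * s1 ^ 2 + 4 * s2 - 7 * s1 - 6 := by
  simp only [ch23, ch32, ch21, ch12, s1, s2, s3, Δ0double, Δ0, Δ1, Δ2, Δ3, Δ4, wsum,
    List.map_cons, List.map_nil, List.sum_cons, List.sum_nil]
  ring_nf
  simp only [expw_sq, expw_mul, Prod.mk_add_mk, expw_zero]
  norm_num [expw_zero, expw_zero']
  ring


/-- Modulo `z⁴`, the product `Φ⁽²⁾` equals
`1 - 2z·ch L(α₁+α₂) + z²(ch L(2α₁+2α₂) + 3 ch L(2α₁+α₂) + 3 ch L(α₁+2α₂))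
 - 2z³(ch L(2α₁+3α₂) + ch L(3α₁+2α₂) - ch L(2α₁+α₂) - ch L(α₁+2α₂))`. -/
theorem phi2_truncation :
    (X ^ 4 : Polynomial ChRing) ∣
      Phi2 - (1 - 2 * C ch11 * X + C (ch22 + 3 * ch21 + 3 * ch12) * X ^ 2
        - 2 * C (ch23 + ch32 - ch21 - ch12) * X ^ 3) := by
  have hL : (X : Polynomial ChRing) ^ 4 ∣
      ((Δ0.map fun α => 1 - C (expw α) * X).prod) - P1 :=
    ⟨C e4 - C e5 * X + C e6 * X ^ 2, by rw [eL]; ring⟩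
  have hM1 : (X : Polynomial ChRing) ^ 4 ∣
      ((Δ0.map fun α => 1 - C (expw α) * X ^ 2).prod) - (1 - C s1 * X ^ 2) :=
    ⟨C s2 - C s3 * X ^ 2 + C e4 * X ^ 4 - C e5 * X ^ 6 + C e6 * X ^ 8, by rw [eM]; ring⟩
  have hN1 : (X : Polynomial ChRing) ^ 4 ∣
      ((Δ0.map fun α => 1 - C (expw α) * X ^ 3).prod) - (1 - C s1 * X ^ 3) :=
    ⟨X ^ 2 * (C s2 - C s3 * X ^ 3 + C e4 * X ^ 6 - C e5 * X ^ 9 + C e6 * X ^ 12),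
      by rw [eN]; ring⟩
  have hMp : (X : Polynomial ChRing) ^ 4 ∣
      (1 - C s1 * X ^ 2) ^ 4 - (1 - 4 * (C s1 * X ^ 2)) := by
    have h := one_sub_pow (C s1 * X ^ 2 : Polynomial ChRing) 4
    push_cast at h
    exact dvd_trans ⟨C s1 ^ 2, by ring⟩ h
  have hNp : (X : Polynomial ChRing) ^ 4 ∣
      (1 - C s1 * X ^ 3) ^ 8 - (1 - 8 * (C s1 * X ^ 3)) := by
    have h := one_sub_pow (C s1 * X ^ 3 : Polynomial ChRing) 8
    push_cast at h
    exact dvd_trans ⟨C s1 ^ 2 * X ^ 2, by ring⟩ h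
  have hX2 : (X : Polynomial ChRing) ^ 4 ∣ (1 - X ^ 2) ^ 9 - (1 - 9 * X ^ 2) := by
    have h := one_sub_pow (X ^ 2 : Polynomial ChRing) 9
    push_cast at h
    exact dvd_trans ⟨1, by ring⟩ h
  have hX3 : (X : Polynomial ChRing) ^ 4 ∣ (1 - X ^ 3) ^ 20 - (1 - 20 * X ^ 3) := by
    have h := one_sub_pow (X ^ 3 : Polynomial ChRing) 20
    push_cast at h
    exact dvd_trans ⟨X ^ 2, by ring⟩ h
  have h1X : (X : Polynomial ChRing) ^ 4 ∣ (1 - X) ^ 4 - (1 - X) ^ 4 := by simp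
  have hPhi : (X : Polynomial ChRing) ^ 4 ∣ Phi2 - Q2 := by
    unfold Phi2 Q2
    exact modcong_mul (modcong_mul (modcong_mul (modcong_mul
      (modcong_mul (modcong_pow hL 2) h1X)
      (modcong_trans (modcong_pow hM1 4) hMp)) hX2)
      (modcong_trans (modcong_pow hN1 8) hNp)) hX3
  have htarget : (1 - 2 * C ch11 * X + C (ch22 + 3 * ch21 + 3 * ch12) * X ^ 2
      - 2 * C (ch23 + ch32 - ch21 - ch12) * X ^ 3 : Polynomial ChRing) = finq := by
    rw [i2, i3, show ch11 = s1 + 2 from rfl, finq]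
    simp only [map_add, map_mul, map_neg, map_sub, map_pow, map_one, map_ofNat]
    ring
  rw [htarget]
  exact modcong_trans hPhi hQ2
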